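/- Let M be a profinite flat O-module with pseudobasis indexed by a set I, and let X be any O-module. Then the completed tensor product X ⊗̂ M := lim_i (X ⊗_O M/I_i), where (I_i) runs through a cofinal system of open O-submodules of M, is naturally isomorphic to the product ∏_{i∈I} X̂, where X̂ denotes the ϖ-adic completion of X. -/

import Mathlib

open TensorProduct Classical

/-- The cofinal family of open submodules `M_{J,n} = ∏_{i∈J} ϖ^n O × ∏_{i∉J} O` of the
profinite flat `O`-module `M = ∏_{i∈I} O` (with pseudobasis indexed by `I`). -/
noncomputable def MJn (O : Type*) [CommRing O] (ϖ : O) (I : Type*) (q : Finset I × ℕ) :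
    Submodule O (I → O) :=
  Submodule.pi Set.univ fun i => if i ∈ q.1 then (Ideal.span {ϖ} ^ q.2 : Ideal O) else ⊤

theorem MJn_antitone (O : Type*) [CommRing O] (ϖ : O) (I : Type*) {q q' : Finset I × ℕ}
    (h : q ≤ q') : MJn O ϖ I q' ≤ MJn O ϖ I q := by
  intro m hm
  rw [MJn, Submodule.mem_pi] at hm ⊢
  intro i hi
  by_cases hiq : i ∈ q.1
  · have hiq' : i ∈ q'.1 := h.1 hiq
    have h1 := hm i hi
    rw [if_pos hiq'] at h1
    rw [if_pos hiq]
    exact Ideal.pow_le_pow_right h.2 h1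
  · rw [if_neg hiq]
    trivial

/-- Transition maps `X ⊗ M/M_{J',n'} → X ⊗ M/M_{J,n}` of the inverse system defining the
completed tensor product `X ⊗̂ M`. -/
noncomputable def ctransition (O : Type*) [CommRing O] (ϖ : O) (I : Type*)
    (X : Type*) [AddCommGroup X] [Module O X] {q q' : Finset I × ℕ} (h : q ≤ q') :
    X ⊗[O] ((I → O) ⧸ MJn O ϖ I q') →ₗ[O] X ⊗[O] ((I → O) ⧸ MJn O ϖ I q) :=
  LinearMap.lTensor X
    (Submodule.mapQ (MJn O ϖ I q') (MJn O ϖ I q) LinearMap.id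
      (fun _ hx => MJn_antitone O ϖ I h hx))

/-- The completed tensor product `X ⊗̂ M = lim_{(J,n)} (X ⊗_O M/M_{J,n})` of an `O`-module `X`
with the profinite flat module `M = ∏_{i∈I} O`, as the inverse limit (submodule of compatible
families). -/
noncomputable def CompletedTensor (O : Type*) [CommRing O] (ϖ : O) (I : Type*) (X : Type*)
    [AddCommGroup X] [Module O X] :
    Submodule O (∀ q : Finset I × ℕ, X ⊗[O] ((I → O) ⧸ MJn O ϖ I q)) where
  carrier := {v | ∀ (q q' : Finset I × ℕ) (h : q ≤ q'), ctransition O ϖ I X h (v q') = v q}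
  add_mem' := by
    intro a b ha hb q q' h
    simp only [Pi.add_apply, map_add, ha q q' h, hb q q' h]
  zero_mem' := by
    intro q q' h
    simp
  smul_mem' := by
    intro c v hv q q' h
    simp only [Pi.smul_apply, map_smul, hv q q' h]

/-- Functoriality of `X ↦ X ⊗̂ M` in `X`. -/
noncomputable def ctensorMap (O : Type*) [CommRing O] (ϖ : O) (I : Type*) {X Y : Type*}
    [AddCommGroup X] [Module O X] [AddCommGroup Y] [Module O Y] (f : X →ₗ[O] Y) :
    CompletedTensor O ϖ I X →ₗ[O] CompletedTensor O ϖ I Y where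
  toFun v := ⟨fun q => LinearMap.rTensor ((I → O) ⧸ MJn O ϖ I q) f (v.1 q), by
    intro q q' h
    have h1 : (ctransition O ϖ I Y h).comp
          (LinearMap.rTensor ((I → O) ⧸ MJn O ϖ I q') f)
        = (LinearMap.rTensor ((I → O) ⧸ MJn O ϖ I q) f).comp (ctransition O ϖ I X h) := by
      unfold ctransition
      rw [LinearMap.lTensor_comp_rTensor, LinearMap.rTensor_comp_lTensor]
    have h2 := LinearMap.congr_fun h1 (v.1 q')
    simp only [LinearMap.comp_apply] at h2
    rw [h2, v.2 q q' h]⟩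
  map_add' := by
    intro u v
    apply Subtype.ext
    funext q
    simp
  map_smul' := by
    intro c v
    apply Subtype.ext
    funext q
    simp

/-!
STATEMENT 4: Let `M` be a profinite flat `O`-module with pseudobasis indexed by a set `I`
(so `M ≅ ∏_{i∈I} O`, realized here as `M = I → O`), and let `X` be any `O`-module.  Then the
completed tensor product `X ⊗̂ M := lim_i (X ⊗_O M/I_i)`, where `(I_i)` runs through a cofinal
system of open `O`-submodules of `M` (here the cofinal system `M_{J,n}`, `J ⊆ I` finite,
`n ∈ ℕ`), is naturally isomorphic to the product `∏_{i∈I} X̂`, where `X̂` denotes the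
`ϖ`-adic completion of `X` (here `AdicCompletion (Ideal.span {ϖ}) X`).

`O` plays the role of the ring of integers of a finite extension `K/ℚ_p` with uniformizer `ϖ`.
-/
section Aux

variable {O : Type*} [CommRing O] {ϖ : O} {I : Type*}
variable {X : Type*} [AddCommGroup X] [Module O X]

/-- Evaluation at `i` on the quotient, for `q = ({i}, n)`. -/
noncomputable def evQ (O : Type*) [CommRing O] (ϖ : O) {I : Type*} (i : I) (n : ℕ) :
    ((I → O) ⧸ MJn O ϖ I ({i}, n)) →ₗ[O] O ⧸ (Ideal.span {ϖ} ^ n : Ideal O) :=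
  Submodule.liftQ _ ((Ideal.span {ϖ} ^ n : Ideal O).mkQ.comp (LinearMap.proj i)) (by
    intro m hm
    rw [MJn, Submodule.mem_pi] at hm
    have h1 := hm i (Set.mem_univ i)
    rw [if_pos (Finset.mem_singleton_self i)] at h1
    simp only [LinearMap.mem_ker, LinearMap.comp_apply, LinearMap.proj_apply,
      Submodule.mkQ_apply]
    exact (Submodule.Quotient.mk_eq_zero _).mpr h1)

@[simp]
lemma evQ_mk (O : Type*) [CommRing O] (ϖ : O) {I : Type*} (i : I) (n : ℕ) (m : I → O) :
    evQ O ϖ i n (Submodule.Quotient.mk m) = Submodule.Quotient.mk (m i) := rfl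

/-- `single i` on the quotient. -/
noncomputable def singleQ (O : Type*) [CommRing O] (ϖ : O) {I : Type*} (i : I)
    (q : Finset I × ℕ) :
    (O ⧸ (Ideal.span {ϖ} ^ q.2 : Ideal O)) →ₗ[O] ((I → O) ⧸ MJn O ϖ I q) :=
  Submodule.mapQ _ _ (LinearMap.single O (fun _ : I => O) i) (by
    intro a ha
    rw [Submodule.mem_comap, MJn, Submodule.mem_pi]
    intro j _
    by_cases hj : j ∈ q.1
    · rw [if_pos hj]
      rcases eq_or_ne j i with rfl | hne
      · simpa [LinearMap.single_apply] using ha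
      · simp [LinearMap.single_apply, Pi.single_apply, hne]
    · rw [if_neg hj]; trivial)

@[simp]
lemma singleQ_mk (O : Type*) [CommRing O] (ϖ : O) {I : Type*} (i : I) (q : Finset I × ℕ)
    (a : O) :
    singleQ O ϖ i q (Submodule.Quotient.mk a) = Submodule.Quotient.mk (Pi.single i a) := rfl

variable (X) in
/-- Forward component map. -/
noncomputable def phiMap (O : Type*) [CommRing O] (ϖ : O) {I : Type*}
    (X : Type*) [AddCommGroup X] [Module O X] (i : I) (n : ℕ) :
    (X ⊗[O] ((I → O) ⧸ MJn O ϖ I ({i}, n))) →ₗ[O]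
      X ⧸ (Ideal.span {ϖ} ^ n • ⊤ : Submodule O X) :=
  (TensorProduct.tensorQuotEquivQuotSMul X (Ideal.span {ϖ} ^ n)).toLinearMap ∘ₗ
    LinearMap.lTensor X (evQ O ϖ i n)

@[simp]
lemma phiMap_tmul_mk (O : Type*) [CommRing O] (ϖ : O) {I : Type*}
    (X : Type*) [AddCommGroup X] [Module O X] (i : I) (n : ℕ) (x : X) (m : I → O) :
    phiMap O ϖ X i n (x ⊗ₜ Submodule.Quotient.mk m) = Submodule.Quotient.mk (m i • x) := by
  simp [phiMap, Ideal.Quotient.mk_eq_mk]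

/-- Backward component map. -/
noncomputable def iotaMap (O : Type*) [CommRing O] (ϖ : O) {I : Type*}
    (X : Type*) [AddCommGroup X] [Module O X] (i : I) (q : Finset I × ℕ) :
    (X ⧸ (Ideal.span {ϖ} ^ q.2 • ⊤ : Submodule O X)) →ₗ[O]
      X ⊗[O] ((I → O) ⧸ MJn O ϖ I q) :=
  LinearMap.lTensor X (singleQ O ϖ i q) ∘ₗ
    (TensorProduct.tensorQuotEquivQuotSMul X (Ideal.span {ϖ} ^ q.2)).symm.toLinearMap

@[simp]
lemma iotaMap_mk (O : Type*) [CommRing O] (ϖ : O) {I : Type*}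
    (X : Type*) [AddCommGroup X] [Module O X] (i : I) (q : Finset I × ℕ) (y : X) :
    iotaMap O ϖ X i q (Submodule.Quotient.mk y) =
      y ⊗ₜ Submodule.Quotient.mk (Pi.single i (1 : O)) := by
  simp only [iotaMap, LinearMap.comp_apply, LinearEquiv.coe_coe,
    TensorProduct.tensorQuotEquivQuotSMul_symm_mk]
  rw [LinearMap.lTensor_tmul]
  congr 1

@[simp]
lemma ctransition_tmul (O : Type*) [CommRing O] (ϖ : O) (I : Type*)
    (X : Type*) [AddCommGroup X] [Module O X] {q q' : Finset I × ℕ} (h : q ≤ q')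
    (x : X) (m : I → O) :
    ctransition O ϖ I X h (x ⊗ₜ Submodule.Quotient.mk m) =
      x ⊗ₜ Submodule.Quotient.mk m := by
  simp [ctransition, Submodule.mapQ_apply]

end Aux

section Main

variable (O : Type*) [CommRing O] (ϖ : O) {I : Type*}
variable (X : Type*) [AddCommGroup X] [Module O X]

lemma mk_single_one_eq_zero {i : I} {q : Finset I × ℕ} (hi : i ∉ q.1) :
    (Submodule.Quotient.mk (Pi.single i (1 : O)) : (I → O) ⧸ MJn O ϖ I q) = 0 := by
  rw [Submodule.Quotient.mk_eq_zero]
  rw [MJn, Submodule.mem_pi]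
  intro j _
  by_cases hj : j ∈ q.1
  · rw [if_pos hj]
    have hne : j ≠ i := fun e => hi (e ▸ hj)
    simp [Pi.single_apply, hne]
  · rw [if_neg hj]; trivial

lemma phiMap_iotaMap (i : I) (n : ℕ)
    (z : X ⧸ (Ideal.span {ϖ} ^ n • ⊤ : Submodule O X)) :
    phiMap O ϖ X i n (iotaMap O ϖ X i (({i}, n) : Finset I × ℕ) z) = z := by
  obtain ⟨y, rfl⟩ := Submodule.Quotient.mk_surjective _ z
  rw [iotaMap_mk, phiMap_tmul_mk, Pi.single_eq_same, one_smul]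

lemma sum_iota_phi (q : Finset I × ℕ) (w : X ⊗[O] ((I → O) ⧸ MJn O ϖ I q)) :
    ∑ i ∈ q.1.attach, iotaMap O ϖ X i.1 q (phiMap O ϖ X i.1 q.2
      (ctransition O ϖ I X (q := ((({i.1}, q.2) : Finset I × ℕ))) (q' := q)
        ⟨Finset.singleton_subset_iff.mpr i.2, le_refl _⟩ w)) = w := by
  induction w using TensorProduct.induction_on with
  | zero => simp
  | tmul x y =>
    obtain ⟨m, rfl⟩ := Submodule.Quotient.mk_surjective _ y
    simp only [ctransition_tmul, phiMap_tmul_mk, iotaMap_mk]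
    have h1 : ∀ i : I, (m i • x) ⊗ₜ[O]
        (Submodule.Quotient.mk (Pi.single i (1 : O)) : (I → O) ⧸ MJn O ϖ I q)
        = x ⊗ₜ Submodule.Quotient.mk (Pi.single i (m i)) := by
      intro i
      rw [TensorProduct.smul_tmul, ← Submodule.Quotient.mk_smul, ← Pi.single_smul,
        smul_eq_mul, mul_one]
    rw [Finset.sum_congr rfl (fun i _ => h1 i.1), ← TensorProduct.tmul_sum]
    congr 1
    have h2 : ∑ i ∈ q.1.attach,
        (Submodule.Quotient.mk (Pi.single i.1 (m i.1)) : (I → O) ⧸ MJn O ϖ I q)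
        = Submodule.Quotient.mk (∑ i ∈ q.1, Pi.single i (m i)) := by
      rw [← Finset.sum_attach q.1 (fun i => Pi.single i (m i))]
      exact (map_sum (Submodule.mkQ _) _ _).symm
    rw [h2]
    rw [Submodule.Quotient.eq]
    rw [MJn, Submodule.mem_pi]
    intro j _
    by_cases hj : j ∈ q.1
    · rw [if_pos hj]
      have : (∑ i ∈ q.1, Pi.single i (m i)) j = m j := by
        rw [Finset.sum_apply]
        simp only [Pi.single_apply]
        rw [Finset.sum_ite_eq q.1 j m]
        exact if_pos hj
      rw [Pi.sub_apply, this, sub_self]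
      exact Submodule.zero_mem _
    · rw [if_neg hj]; trivial
  | add a b ha hb =>
    simp only [map_add, Finset.sum_add_distrib, ha, hb]

/-- The forward map `X ⊗̂ M → ∏ᵢ X̂`. -/
noncomputable def fwd : (CompletedTensor O ϖ I X) →ₗ[O]
    (I → AdicCompletion (Ideal.span {ϖ}) X) where
  toFun v i := ⟨fun n => phiMap O ϖ X i n (v.1 (({i}, n) : Finset I × ℕ)), by
    intro m n hmn
    have h1 : AdicCompletion.transitionMap (Ideal.span {ϖ}) X hmn ∘ₗ phiMap O ϖ X i n
        = phiMap O ϖ X i m ∘ₗ ctransition O ϖ I X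
          (show ((({i}, m) : Finset I × ℕ)) ≤ ({i}, n) from ⟨le_refl _, hmn⟩) := by
      apply TensorProduct.ext'
      intro x y
      obtain ⟨mm, rfl⟩ := Submodule.Quotient.mk_surjective _ y
      simp
    have h2 := LinearMap.congr_fun h1 (v.1 (({i}, n) : Finset I × ℕ))
    simp only [LinearMap.comp_apply] at h2
    rw [h2, v.2 ({i}, m) ({i}, n) ⟨le_refl _, hmn⟩]⟩
  map_add' u v := by
    funext i
    refine AdicCompletion.ext fun n => ?_
    show phiMap O ϖ X i n ((u + v).1 ({i}, n)) =
      phiMap O ϖ X i n (u.1 ({i}, n)) + phiMap O ϖ X i n (v.1 ({i}, n))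
    rw [show ((u + v) : CompletedTensor O ϖ I X).1 ({i}, n)
      = u.1 ({i}, n) + v.1 ({i}, n) from rfl, map_add]
  map_smul' c v := by
    funext i
    refine AdicCompletion.ext fun n => ?_
    show phiMap O ϖ X i n ((c • v).1 ({i}, n)) = c • phiMap O ϖ X i n (v.1 ({i}, n))
    rw [show ((c • v) : CompletedTensor O ϖ I X).1 ({i}, n)
      = c • v.1 ({i}, n) from rfl, map_smul]

/-- The backward map `∏ᵢ X̂ → X ⊗̂ M`. -/
noncomputable def bwd : (I → AdicCompletion (Ideal.span {ϖ}) X) →ₗ[O]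
    (CompletedTensor O ϖ I X) where
  toFun x := ⟨fun q => ∑ i ∈ q.1, iotaMap O ϖ X i q ((x i).1 q.2), by
    intro q q' h
    rw [map_sum]
    have h1 : ∀ i ∈ q'.1, ctransition O ϖ I X h (iotaMap O ϖ X i q' ((x i).1 q'.2))
        = if i ∈ q.1 then iotaMap O ϖ X i q ((x i).1 q.2) else 0 := by
      intro i _
      obtain ⟨y, hy⟩ := Submodule.Quotient.mk_surjective _ ((x i).1 q'.2)
      have hxq : (x i).1 q.2 = AdicCompletion.transitionMap (Ideal.span {ϖ}) X h.2
          ((x i).1 q'.2) := ((x i).2 h.2).symm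
      by_cases hiq : i ∈ q.1
      · rw [if_pos hiq, ← hy, iotaMap_mk, ctransition_tmul, hxq, ← hy,
          show AdicCompletion.transitionMap (Ideal.span {ϖ}) X h.2 (Submodule.Quotient.mk y)
            = Submodule.Quotient.mk y from rfl, iotaMap_mk]
      · rw [if_neg hiq, ← hy, iotaMap_mk, ctransition_tmul,
          mk_single_one_eq_zero O ϖ hiq, TensorProduct.tmul_zero]
    rw [Finset.sum_congr rfl h1, Finset.sum_ite_mem,
      Finset.inter_eq_right.mpr h.1]⟩
  map_add' u v := by
    apply Subtype.ext
    funext q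
    simp [Finset.sum_add_distrib]
  map_smul' c v := by
    apply Subtype.ext
    funext q
    simp [AdicCompletion.val_smul, Finset.smul_sum]

lemma fwd_bwd : (fwd O ϖ X (I := I)) ∘ₗ (bwd O ϖ X) = LinearMap.id := by
  apply LinearMap.ext
  intro x
  funext i
  apply AdicCompletion.ext
  intro n
  show phiMap O ϖ X i n ((bwd O ϖ X x).1 (({i}, n) : Finset I × ℕ)) = (x i).1 n
  show phiMap O ϖ X i n
      (∑ j ∈ ({i} : Finset I), iotaMap O ϖ X j (({i}, n) : Finset I × ℕ) ((x j).1 n))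
      = (x i).1 n
  rw [Finset.sum_singleton, phiMap_iotaMap]

lemma bwd_fwd : (bwd O ϖ X (I := I)) ∘ₗ (fwd O ϖ X) = LinearMap.id := by
  apply LinearMap.ext
  intro v
  apply Subtype.ext
  funext q
  show ∑ i ∈ q.1, iotaMap O ϖ X i q (phiMap O ϖ X i q.2 (v.1 (({i}, q.2) : Finset I × ℕ)))
      = v.1 q
  rw [← Finset.sum_attach q.1
    (fun i => iotaMap O ϖ X i q (phiMap O ϖ X i q.2 (v.1 (({i}, q.2) : Finset I × ℕ))))]
  have h1 : ∀ i : {x // x ∈ q.1}, v.1 (({i.1}, q.2) : Finset I × ℕ)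
      = ctransition O ϖ I X (q := ((({i.1}, q.2) : Finset I × ℕ))) (q' := q)
        ⟨Finset.singleton_subset_iff.mpr i.2, le_refl _⟩ (v.1 q) :=
    fun i => (v.2 ({i.1}, q.2) q ⟨Finset.singleton_subset_iff.mpr i.2, le_refl _⟩).symm
  rw [Finset.sum_congr rfl (fun i _ => by rw [h1 i])]
  exact sum_iota_phi O ϖ X q (v.1 q)

end Main

theorem completedTensor_iso_prod_adicCompletion (O : Type*) [CommRing O] (ϖ : O)
    (I : Type*) (X : Type*) [AddCommGroup X] [Module O X] :
    Nonempty ((CompletedTensor O ϖ I X) ≃ₗ[O]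
      (I → AdicCompletion (Ideal.span {ϖ}) X)) := by
  exact ⟨LinearEquiv.ofLinear (fwd O ϖ X) (bwd O ϖ X)
    (fwd_bwd O ϖ X) (bwd_fwd O ϖ X)⟩
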